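/- Let G : Ω₂ → ℝ (Ω₂ ⊆ ℝ² a rectangle) be 2-increasing (i.e., G(x₁,y₁) + G(x₂,y₂) ≥ G(x₁,y₂) + G(x₂,y₁) whenever x₁ ≤ x₂, y₁ ≤ y₂) and coordinatewise non-decreasing, and let f : ℝ → ℝ be non-decreasing and convex. Then f ∘ G is 2-increasing. -/

import Mathlib

lemma convex_key (f : ℝ → ℝ) (hf : ConvexOn ℝ Set.univ f)
    {a b e : ℝ} (hab : a ≤ b) (hbe : b ≤ e) :
    f b + f (a + e - b) ≤ f a + f e := by
  rcases eq_or_lt_of_le (hab.trans hbe) with h | h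
  · have hb : b = a := le_antisymm (h ▸ hbe) hab
    subst hb; simp [← h]
  · set t : ℝ := (b - a) / (e - a) with ht
    have hea : 0 < e - a := by linarith
    have ht0 : 0 ≤ t := div_nonneg (by linarith) hea.le
    have ht1 : t ≤ 1 := (div_le_one hea).2 (by linarith)
    have hb : b = (1 - t) * a + t * e := by
      have := div_mul_cancel₀ (b - a) hea.ne'; rw [← ht] at this; linear_combination -this
    have hc : a + e - b = t * a + (1 - t) * e := by
      have := div_mul_cancel₀ (b - a) hea.ne'; rw [← ht] at this; linear_combination this
    have h1 := hf.2 (Set.mem_univ a) (Set.mem_univ e) (by linarith : (0:ℝ) ≤ 1 - t) ht0 (by ring)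
    have h2 := hf.2 (Set.mem_univ a) (Set.mem_univ e) ht0 (by linarith : (0:ℝ) ≤ 1 - t) (by ring)
    simp only [smul_eq_mul] at h1 h2
    rw [hc, hb]
    linarith

theorem comp_convex_monotone_two_increasing
    (Ω : Set (ℝ × ℝ)) (G : ℝ → ℝ → ℝ) (f : ℝ → ℝ)
    (h2incr : ∀ x₁ x₂ y₁ y₂ : ℝ, x₁ ≤ x₂ → y₁ ≤ y₂ →
      Set.Icc x₁ x₂ ×ˢ Set.Icc y₁ y₂ ⊆ Ω →
      G x₁ y₂ + G x₂ y₁ ≤ G x₁ y₁ + G x₂ y₂)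
    (hmono₁ : ∀ x₁ x₂ y : ℝ, x₁ ≤ x₂ → (x₁, y) ∈ Ω → (x₂, y) ∈ Ω → G x₁ y ≤ G x₂ y)
    (hmono₂ : ∀ x y₁ y₂ : ℝ, y₁ ≤ y₂ → (x, y₁) ∈ Ω → (x, y₂) ∈ Ω → G x y₁ ≤ G x y₂)
    (hf_mono : Monotone f) (hf_conv : ConvexOn ℝ Set.univ f) :
    ∀ x₁ x₂ y₁ y₂ : ℝ, x₁ ≤ x₂ → y₁ ≤ y₂ →
      Set.Icc x₁ x₂ ×ˢ Set.Icc y₁ y₂ ⊆ Ω →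
      f (G x₁ y₂) + f (G x₂ y₁) ≤ f (G x₁ y₁) + f (G x₂ y₂) := by
  intro x₁ x₂ y₁ y₂ hx hy hsub
  have m11 : (x₁, y₁) ∈ Ω := hsub ⟨⟨le_refl _, hx⟩, ⟨le_refl _, hy⟩⟩
  have m12 : (x₁, y₂) ∈ Ω := hsub ⟨⟨le_refl _, hx⟩, ⟨hy, le_refl _⟩⟩
  have m21 : (x₂, y₁) ∈ Ω := hsub ⟨⟨hx, le_refl _⟩, ⟨le_refl _, hy⟩⟩
  have m22 : (x₂, y₂) ∈ Ω := hsub ⟨⟨hx, le_refl _⟩, ⟨hy, le_refl _⟩⟩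
  set a := G x₁ y₁
  set b := G x₁ y₂
  set c := G x₂ y₁
  set d := G x₂ y₂
  have hab : a ≤ b := hmono₂ x₁ y₁ y₂ hy m11 m12
  have hac : a ≤ c := hmono₁ x₁ x₂ y₁ hx m11 m21
  have hbcad : b + c ≤ a + d := h2incr x₁ x₂ y₁ y₂ hx hy hsub
  set e := b + c - a with he
  have hbe : b ≤ e := by dsimp [e]; linarith
  have hed : e ≤ d := by dsimp [e]; linarith
  have key := convex_key f hf_conv hab hbe
  have hce : a + e - b = c := by dsimp [e]; ring
  rw [hce] at key
  have := hf_mono hed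
  linarith
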